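/- Let l ≥ 1, let n : Fin l → ℕ be positive, let J be a finite index type, and let m : J → ℕ be positive. If there exists an embedding of MV-algebras from ∏_{i<l} Ł_{n_i} into ∏_{j∈J} Ł_{m_j} (products with componentwise operations), then for every i < l there exists j ∈ J such that n_i divides m_j. -/

import Mathlib

/-- The carrier of the Łukasiewicz chain Łₙ : {k/n : k ∈ ℕ, 0 ≤ k ≤ n} ⊆ ℚ. -/
abbrev Luk (n : ℕ+) : Type := {x : ℚ // ∃ k : ℕ, k ≤ (n : ℕ) ∧ x = (k : ℚ) / (n : ℕ)}

/-- The constant 0 of Łₙ. -/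
def lukZero (n : ℕ+) : Luk n := ⟨0, 0, Nat.zero_le _, by simp⟩

/-- The negation ¬x = 1 - x of Łₙ. -/
def lukNeg {n : ℕ+} (x : Luk n) : Luk n :=
  ⟨1 - x.1, by
    obtain ⟨k, hk, hx⟩ := x.2
    refine ⟨(n : ℕ) - k, Nat.sub_le _ _, ?_⟩
    have hn : ((n : ℕ) : ℚ) ≠ 0 := by exact_mod_cast n.pos.ne'
    rw [hx, Nat.cast_sub hk, sub_div, div_self hn]⟩

/-- The truncated sum x ⊕ y = min 1 (x + y) of Łₙ. -/
def lukOplus {n : ℕ+} (x y : Luk n) : Luk n :=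
  ⟨min 1 (x.1 + y.1), by
    obtain ⟨k, hk, hx⟩ := x.2
    obtain ⟨j, hj, hy⟩ := y.2
    refine ⟨min (n : ℕ) (k + j), min_le_left _ _, ?_⟩
    have hn : (0 : ℚ) < ((n : ℕ) : ℚ) := by exact_mod_cast n.pos
    rw [hx, hy, ← add_div]
    rcases le_total (k + j) (n : ℕ) with h | h
    · rw [min_eq_right h, min_eq_right]
      · push_cast; ring_nf
      · rw [div_le_one hn]; exact_mod_cast h
    · rw [min_eq_left h, min_eq_left, div_self hn.ne']
      · rw [one_le_div hn]; exact_mod_cast h⟩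

/-- The constant 1 of Łₙ. -/
def lukOne (n : ℕ+) : Luk n :=
  ⟨1, (n : ℕ), le_rfl, by
    rw [div_self]; exact_mod_cast n.pos.ne'⟩

/-- The element 1/n of Łₙ. -/
def lukInv (n : ℕ+) : Luk n :=
  ⟨1 / (n : ℕ), 1, n.one_le, by norm_num⟩

/-- Iterated ⊕ : r copies of x. -/
def lukIter {n : ℕ+} (r : ℕ) (x : Luk n) : Luk n :=
  Nat.rec (lukZero n) (fun _ y => lukOplus x y) r

lemma luk_nonneg {n : ℕ+} (x : Luk n) : 0 ≤ x.1 := by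
  obtain ⟨k, hk, hx⟩ := x.2
  rw [hx]
  positivity

lemma luk_le_one {n : ℕ+} (x : Luk n) : x.1 ≤ 1 := by
  obtain ⟨k, hk, hx⟩ := x.2
  have hn : (0 : ℚ) < ((n : ℕ) : ℚ) := by exact_mod_cast n.pos
  rw [hx, div_le_one hn]
  exact_mod_cast hk

lemma lukIter_val {n : ℕ+} (r : ℕ) (x : Luk n) :
    (lukIter r x).1 = min 1 ((r : ℚ) * x.1) := by
  induction r with
  | zero => simp [lukIter, lukZero]
  | succ r ih =>
    have hx := luk_nonneg x
    have hstep : (lukIter (r + 1) x).1 = min 1 (x.1 + (lukIter r x).1) := rfl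
    rw [hstep, ih]
    rcases le_total ((r : ℚ) * x.1) 1 with hr | hr
    · rw [min_eq_right hr]
      congr 1
      push_cast
      ring
    · rw [min_eq_left hr, min_eq_left, min_eq_left]
      · push_cast
        nlinarith
      · linarith

/-- If ∏ Ł_(n i) embeds into ∏ Ł_(m j) (J finite), then every n i divides some m j. -/
theorem embed_prod_dvd_forward (l : ℕ) (hl : 1 ≤ l) (n : Fin l → ℕ+)
    (J : Type*) [Fintype J] (m : J → ℕ+)
    (h : ∃ f : (∀ i, Luk (n i)) → ∀ j, Luk (m j), Function.Injective f ∧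
      (∀ x y, f (fun i => lukOplus (x i) (y i)) = fun j => lukOplus (f x j) (f y j)) ∧
      (∀ x, f (fun i => lukNeg (x i)) = fun j => lukNeg (f x j)) ∧
      (f (fun i => lukZero (n i)) = fun j => lukZero (m j))) :
    ∀ i : Fin l, ∃ j : J, (n i : ℕ) ∣ (m j : ℕ) := by
  obtain ⟨f, hinj, hplus, hneg, h0⟩ := h
  intro i
  set N : ℕ := (n i : ℕ) with hN
  have hNpos : 0 < N := (n i).pos
  have hNQ : (0 : ℚ) < (N : ℚ) := by exact_mod_cast hNpos
  -- the idempotent δ (1 at coordinate i, 0 elsewhere)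
  set δ : ∀ i', Luk (n i') := fun i' => if i' = i then lukOne (n i') else lukZero (n i') with hδ
  -- the element a (1/n_i at coordinate i, 0 elsewhere)
  set a : ∀ i', Luk (n i') := fun i' => if i' = i then lukInv (n i') else lukZero (n i') with ha
  -- f preserves iterated sums
  have hIter : ∀ (r : ℕ) (x : ∀ i', Luk (n i')),
      f (fun i' => lukIter r (x i')) = fun j => lukIter r (f x j) := by
    intro r x
    induction r with
    | zero => exact h0
    | succ r ih =>
      have : (fun i' => lukIter (r + 1) (x i')) =
          fun i' => lukOplus (x i') (lukIter r (x i')) := rfl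
      rw [this, hplus]
      funext j
      rw [ih]
      rfl
  -- δ is idempotent
  have hidem : (fun i' => lukOplus (δ i') (δ i')) = δ := by
    funext i'
    apply Subtype.ext
    by_cases hii : i' = i <;> simp [hδ, hii, lukOplus, lukOne, lukZero]
  -- δ ≠ 0
  have hδne : δ ≠ fun i' => lukZero (n i') := by
    intro hcon
    have := congrFun hcon i
    simp only [hδ, if_pos rfl] at this
    have : (1 : ℚ) = 0 := congrArg Subtype.val this
    norm_num at this
  -- obtain j with f δ j ≠ 0
  have hfδne : f δ ≠ fun j => lukZero (m j) := by
    rw [← h0]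
    intro hcon
    exact hδne (hinj hcon)
  have hj : ∃ j, f δ j ≠ lukZero (m j) := by
    by_contra hcon
    push_neg at hcon
    exact hfδne (funext hcon)
  obtain ⟨j, hjne⟩ := hj
  refine ⟨j, ?_⟩
  -- f δ j = 1
  have hidem' : lukOplus (f δ j) (f δ j) = f δ j := by
    have e1 := hplus δ δ
    rw [hidem] at e1
    exact (congrFun e1 j).symm
  have htne : (f δ j).1 ≠ 0 := by
    intro hcon
    exact hjne (Subtype.ext (by rw [hcon]; rfl))
  have hfδ1 : (f δ j).1 = 1 := by
    have hv : min 1 ((f δ j).1 + (f δ j).1) = (f δ j).1 := congrArg Subtype.val hidem'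
    have h1 := luk_le_one (f δ j)
    have h2 := luk_nonneg (f δ j)
    rcases le_total ((f δ j).1 + (f δ j).1) 1 with hc | hc
    · rw [min_eq_right hc] at hv
      exact absurd (by linarith : (f δ j).1 = 0) htne
    · rw [min_eq_left hc] at hv
      exact hv.symm
  -- the key relation in the domain: (N-1)·a ⊕ ¬δ = ¬a
  have hrel : (fun i' => lukOplus (lukIter (N - 1) (a i')) (lukNeg (δ i'))) =
      fun i' => lukNeg (a i') := by
    funext i'
    apply Subtype.ext
    by_cases hii : i' = i
    · subst hii
      show min 1 ((lukIter (N - 1) (a i')).1 + (lukNeg (δ i')).1) = 1 - (a i').1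
      rw [lukIter_val]
      simp only [ha, hδ, if_pos rfl, lukInv, lukNeg, lukOne]
      have hcast : ((N - 1 : ℕ) : ℚ) = (N : ℚ) - 1 := by
        rw [Nat.cast_sub hNpos]; norm_num
      have hval : ((N - 1 : ℕ) : ℚ) * ((1 : ℚ) / (N : ℚ)) = 1 - 1 / (N : ℚ) := by
        rw [hcast]
        field_simp
      rw [hval]
      have hinv : (0 : ℚ) < 1 / (N : ℚ) := by positivity
      rw [min_eq_right (show (1 : ℚ) - 1 / (N : ℚ) ≤ 1 by linarith),
        min_eq_right (show (1 : ℚ) - 1 / (N : ℚ) + (1 - 1) ≤ 1 by linarith)]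
      ring
    · show min 1 ((lukIter (N - 1) (a i')).1 + (lukNeg (δ i')).1) = 1 - (a i').1
      rw [lukIter_val]
      simp [ha, hδ, hii, lukZero, lukNeg]
  -- transport the relation to the codomain
  have hrel2 : (fun j' => lukOplus (lukIter (N - 1) (f a j')) (lukNeg (f δ j'))) =
      fun j' => lukNeg (f a j') := by
    have := congrArg f hrel
    rw [hplus, hneg, hneg, hIter] at this
    exact this
  have hrelj := congrFun hrel2 j
  set t : ℚ := (f a j).1 with ht
  have hval : min 1 ((lukIter (N - 1) (f a j)).1 + (lukNeg (f δ j)).1) = 1 - t :=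
    congrArg Subtype.val hrelj
  rw [lukIter_val] at hval
  have hnegval : (lukNeg (f δ j)).1 = 0 := by
    show 1 - (f δ j).1 = 0
    rw [hfδ1]; ring
  rw [hnegval, add_zero] at hval
  have hmin : min 1 (min 1 (((N - 1 : ℕ) : ℚ) * t)) = min 1 (((N - 1 : ℕ) : ℚ) * t) := by
    rcases le_total (((N - 1 : ℕ) : ℚ) * t) 1 with hc | hc
    · rw [min_eq_right hc, min_eq_right hc]
    · rw [min_eq_left hc]; norm_num
  rw [hmin] at hval
  -- derive N * t = 1
  have ht0 := luk_nonneg (f a j)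
  have hNt : (N : ℚ) * t = 1 := by
    rcases le_total (((N - 1 : ℕ) : ℚ) * t) 1 with hc | hc
    · rw [min_eq_right hc] at hval
      have hcast : ((N - 1 : ℕ) : ℚ) = (N : ℚ) - 1 := by
        rw [Nat.cast_sub hNpos]; norm_num
      rw [hcast] at hval
      nlinarith
    · rw [min_eq_left hc] at hval
      have : t = 0 := by linarith
      rw [this, mul_zero] at hc
      norm_num at hc
  -- conclude divisibility
  obtain ⟨k, hk, hx⟩ := (f a j).2
  rw [← ht] at hx
  have hMQ : (0 : ℚ) < ((m j : ℕ) : ℚ) := by exact_mod_cast (m j).pos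
  have : (N : ℚ) * (k : ℚ) = ((m j : ℕ) : ℚ) := by
    rw [hx] at hNt
    field_simp at hNt
    linarith [hNt]
  have hnat : N * k = (m j : ℕ) := by exact_mod_cast this
  exact ⟨k, hnat.symm⟩
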